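/- For every d-dimensional sand automaton, P-surjectivity implies surjectivity: if every periodic configuration has a periodic preimage under the global function f, then every configuration has a preimage under f. -/

import Mathlib

/-- The extended integers `ℤ ∪ {-∞, +∞}`. -/
abbrev EZ : Type := WithBot (WithTop ℤ)

/-- Embedding of `ℤ` into the extended integers. -/
def finVal (n : ℤ) : EZ := ((n : WithTop ℤ) : EZ)

/-- The integer value of a finite extended integer (`0` on `±∞`). -/
def valZ (x : EZ) : ℤ := WithBot.recBotCoe 0 (fun y => WithTop.recTopCoe 0 id y) x

/-- The measuring device `β_l^m`. -/
noncomputable def beta (l : ℕ) (m : ℤ) (n : EZ) : EZ :=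
  if finVal (m + (l : ℤ)) < n then ⊤
  else if n < finVal (m - (l : ℤ)) then ⊥
  else WithBot.map (WithTop.map (fun k => k - m)) n

/-- Reference height: the value of `x` if finite, `0` if `x = ±∞`. -/
def refH (x : EZ) : ℤ := if x = ⊥ ∨ x = ⊤ then 0 else valZ x

/-- `d`-dimensional sandpile configurations. -/
def ConfigD (d : ℕ) : Type := (Fin d → ℤ) → EZ

/-- The index set of a `d`-dimensional neighborhood of radius `r`: the nonzero
vectors `v ∈ [-r, r]^d`. -/
def NIdx (d r : ℕ) : Type := {v : Fin d → ℤ // (∀ j, |v j| ≤ (r : ℤ)) ∧ v ≠ 0}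

/-- The neighborhood tuple `d_r^i(c) = (β_r^{c_i}(c_{i+v}))_{v ∈ [-r,r]^d, v ≠ 0}`
(with reference height `0` when `c_i = ±∞`). -/
noncomputable def nbhdD (d r : ℕ) (c : ConfigD d) (i : Fin d → ℤ) : NIdx d r → EZ :=
  fun v => beta r (refH (c i)) (c (fun t => i t + v.1 t))

/-- The global function of the `d`-dimensional sand automaton of radius `r`
with local rule `lam`. -/
noncomputable def globalD (d r : ℕ) (lam : (NIdx d r → EZ) → ℤ) (c : ConfigD d) : ConfigD d :=
  fun i => if c i = ⊥ ∨ c i = ⊤ then c i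
    else finVal (valZ (c i) + lam (nbhdD d r c i))

/-- Finite `d`-dimensional configurations: `c_i = 0` whenever the infinity norm
`|i| = max_j |i_j|` is at least some `k`. -/
def FiniteD {d : ℕ} (c : ConfigD d) : Prop :=
  ∃ k : ℕ, ∀ i : Fin d → ℤ, (∃ j, (k : ℤ) ≤ |i j|) → c i = finVal 0

/-- Periodic `d`-dimensional configurations: invariant under translation by `p · e_j`
for some integer `p ≥ 1` and every standard basis vector `e_j`. -/
def PeriodicD {d : ℕ} (c : ConfigD d) : Prop :=
  ∃ p : ℤ, 1 ≤ p ∧ ∀ (i : Fin d → ℤ) (j : Fin d),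
    c (fun t => i t + if t = j then p else 0) = c i

/- ===== auxiliary lemmas ===== -/

lemma finVal_ne_bot (k : ℤ) : finVal k ≠ ⊥ := by simp [finVal]
lemma finVal_ne_top (k : ℤ) : finVal k ≠ ⊤ := by simp [finVal]
lemma valZ_finVal (k : ℤ) : valZ (finVal k) = k := by
  unfold valZ finVal; rw [WithBot.recBotCoe_coe]; rfl
lemma refH_finVal (k : ℤ) : refH (finVal k) = k := by
  rw [refH, if_neg (by rintro (h | h) <;> [exact finVal_ne_bot k h; exact finVal_ne_top k h]),
    valZ_finVal]
lemma finVal_lt_finVal {a b : ℤ} : finVal a < finVal b ↔ a < b := by simp [finVal]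
lemma finVal_le_finVal {a b : ℤ} : finVal a ≤ finVal b ↔ a ≤ b := by simp [finVal]
lemma finVal_inj {a b : ℤ} : finVal a = finVal b ↔ a = b := by simp [finVal]
lemma finVal_lt_top (k : ℤ) : finVal k < ⊤ := lt_top_iff_ne_top.2 (finVal_ne_top k)
lemma bot_lt_finVal (k : ℤ) : ⊥ < finVal k := bot_lt_iff_ne_bot.2 (finVal_ne_bot k)
lemma EZ_cases (z : EZ) : z = ⊥ ∨ z = ⊤ ∨ ∃ k, z = finVal k := by
  induction z using WithBot.recBotCoe with
  | bot => exact Or.inl rfl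
  | coe w => induction w using WithTop.recTopCoe with
    | top => exact Or.inr (Or.inl rfl)
    | coe k => exact Or.inr (Or.inr ⟨k, rfl⟩)

lemma beta_of_gt {l : ℕ} {m : ℤ} {n : EZ} (h : finVal (m + (l:ℤ)) < n) : beta l m n = ⊤ :=
  if_pos h
lemma beta_of_lt {l : ℕ} {m : ℤ} {n : EZ} (h : n < finVal (m - (l:ℤ))) : beta l m n = ⊥ := by
  have h1 : ¬ finVal (m + (l:ℤ)) < n := fun h2 =>
    absurd (h2.trans h) (not_lt.2 (finVal_le_finVal.2 (by omega)))
  rw [beta, if_neg h1, if_pos h]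
lemma beta_top (l : ℕ) (m : ℤ) : beta l m ⊤ = ⊤ := beta_of_gt (finVal_lt_top _)
lemma beta_bot (l : ℕ) (m : ℤ) : beta l m ⊥ = ⊥ := beta_of_lt (bot_lt_finVal _)

instance NIdx.finite (d r : ℕ) : Finite (NIdx d r) := by
  have hmem : ∀ v : NIdx d r, ∀ j, v.1 j ∈ Finset.Icc (-(r:ℤ)) (r:ℤ) := fun v j =>
    Finset.mem_Icc.2 (abs_le.1 (v.2.1 j))
  exact Finite.of_injective
    (fun v => (fun j => (⟨v.1 j, hmem v j⟩ : (Finset.Icc (-(r:ℤ)) (r:ℤ) : Finset ℤ))))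
    (fun v w h => Subtype.ext (funext fun j => congrArg Subtype.val (congrFun h j)))

lemma globalD_finVal {d r : ℕ} {lam : (NIdx d r → EZ) → ℤ} {x : ConfigD d}
    {i : Fin d → ℤ} {k : ℤ} (h : x i = finVal k) :
    globalD d r lam x i = finVal (k + lam (nbhdD d r x i)) := by
  show (if x i = ⊥ ∨ x i = ⊤ then x i else finVal (valZ (x i) + lam (nbhdD d r x i))) = _
  rw [h, if_neg (by rintro (h2 | h2) <;> [exact finVal_ne_bot k h2; exact finVal_ne_top k h2]),
    valZ_finVal]

lemma globalD_top {d r : ℕ} {lam : (NIdx d r → EZ) → ℤ} {x : ConfigD d}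
    {i : Fin d → ℤ} (h : x i = ⊤) : globalD d r lam x i = ⊤ := by
  show (if x i = ⊥ ∨ x i = ⊤ then x i else _) = _
  rw [h, if_pos (Or.inr rfl)]

lemma globalD_bot {d r : ℕ} {lam : (NIdx d r → EZ) → ℤ} {x : ConfigD d}
    {i : Fin d → ℤ} (h : x i = ⊥) : globalD d r lam x i = ⊥ := by
  show (if x i = ⊥ ∨ x i = ⊤ then x i else _) = _
  rw [h, if_pos (Or.inl rfl)]

/- the periodizing reduction -/
def redu (n : ℕ) (x : ℤ) : ℤ := (x + n) % (2*(n:ℤ)+1) - n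
lemma redu_small {n : ℕ} {x : ℤ} (h : |x| ≤ (n:ℤ)) : redu n x = x := by
  have h' := abs_le.1 h
  rw [redu, Int.emod_eq_of_lt (by omega) (by omega)]; omega
lemma redu_shift (n : ℕ) (x : ℤ) : redu n (x + (2*(n:ℤ)+1)) = redu n x := by
  rw [redu, redu]
  have : x + (2*(n:ℤ)+1) + n = (x + n) + (2*(n:ℤ)+1) := by ring
  rw [this]
  have h2 := Int.add_mul_emod_self_left (a := x + (n:ℤ)) (b := 2*(n:ℤ)+1) (c := 1)
  simpa using h2

/- the ultrafilter limit configuration -/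
open Classical in
noncomputable def limCfg (d : ℕ) (U : Ultrafilter ℕ) (E : ℕ → ConfigD d) : ConfigD d :=
  fun i => if h : ∃ x : ℤ, {n | E n i = finVal x} ∈ U then finVal h.choose
    else if {n | finVal 0 ≤ E n i} ∈ U then ⊤ else ⊥

open Classical in
lemma limCfg_mode (d : ℕ) (U : Ultrafilter ℕ) (E : ℕ → ConfigD d) (i : Fin d → ℤ) :
    (∃ x : ℤ, limCfg d U E i = finVal x ∧ {n | E n i = finVal x} ∈ U) ∨
    (limCfg d U E i = ⊤ ∧ ∀ M : ℤ, {n | finVal M < E n i} ∈ U) ∨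
    (limCfg d U E i = ⊥ ∧ ∀ M : ℤ, {n | E n i < finVal M} ∈ U) := by
  rw [limCfg]
  split_ifs with h h2
  · exact Or.inl ⟨h.choose, rfl, h.choose_spec⟩
  · push_neg at h
    refine Or.inr (Or.inl ⟨rfl, fun M => ?_⟩)
    have hsub : {n | finVal 0 ≤ E n i} ∩ ⋂ x ∈ Finset.Icc (0:ℤ) M, {n | E n i ≠ finVal x}
        ⊆ {n | finVal M < E n i} := by
      rintro n ⟨h0, hI⟩
      simp only [Set.mem_iInter, Set.mem_setOf_eq] at h0 hI ⊢
      rcases EZ_cases (E n i) with hb | ht | ⟨k, hk⟩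
      · rw [hb] at h0; exact absurd h0 (not_le.2 (bot_lt_finVal 0))
      · rw [ht]; exact finVal_lt_top M
      · rw [hk] at h0 ⊢
        have h0' : (0:ℤ) ≤ k := finVal_le_finVal.1 h0
        have : k ∉ Finset.Icc (0:ℤ) M := fun hm => hI k hm hk
        exact finVal_lt_finVal.2 (by simp only [Finset.mem_Icc] at this; omega)
    exact Filter.mem_of_superset
      (Filter.inter_mem h2 ((Filter.biInter_finset_mem _).2 fun x _ =>
        (Ultrafilter.compl_mem_iff_notMem).2 (h x))) hsub
  · push_neg at h
    refine Or.inr (Or.inr ⟨rfl, fun M => ?_⟩)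
    have hneg : {n | E n i < finVal 0} ∈ U := by
      refine Filter.mem_of_superset ((Ultrafilter.compl_mem_iff_notMem).2 h2) ?_
      intro n hn
      simp only [Set.mem_compl_iff, Set.mem_setOf_eq] at hn
      exact not_le.1 hn
    have hsub : {n | E n i < finVal 0} ∩ ⋂ x ∈ Finset.Icc M (0:ℤ), {n | E n i ≠ finVal x}
        ⊆ {n | E n i < finVal M} := by
      rintro n ⟨h0, hI⟩
      simp only [Set.mem_iInter, Set.mem_setOf_eq] at h0 hI ⊢
      rcases EZ_cases (E n i) with hb | ht | ⟨k, hk⟩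
      · rw [hb]; exact bot_lt_finVal M
      · rw [ht] at h0; exact absurd h0 (not_top_lt)
      · rw [hk] at h0 ⊢
        have h0' : k < 0 := finVal_lt_finVal.1 h0
        have : k ∉ Finset.Icc M (0:ℤ) := fun hm => hI k hm hk
        exact finVal_lt_finVal.2 (by simp only [Finset.mem_Icc] at this; omega)
    exact Filter.mem_of_superset
      (Filter.inter_mem hneg ((Filter.biInter_finset_mem _).2 fun x _ =>
        (Ultrafilter.compl_mem_iff_notMem).2 (h x))) hsub

/-- For every `d`-dimensional sand automaton (dimension `d ≥ 1`, radius `r ≥ 1`, local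
rule `lam` taking values in `[-r, r]`), `P`-surjectivity implies surjectivity: if every
periodic configuration has a periodic preimage under the global function, then every
configuration has a preimage. -/
theorem P_surjective_implies_surjective
    (d r : ℕ) (hd : 1 ≤ d) (hr : 1 ≤ r)
    (lam : (NIdx d r → EZ) → ℤ)
    (hlam : ∀ v, -(r : ℤ) ≤ lam v ∧ lam v ≤ (r : ℤ))
    (hPsurj : ∀ c : ConfigD d, PeriodicD c → ∃ c', PeriodicD c' ∧ globalD d r lam c' = c) :
    Function.Surjective (globalD d r lam) := by
  intro c
  classical
  -- periodic approximations
  set cfg : ℕ → ConfigD d := fun n i => c fun t => redu n (i t) with hcfg_def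
  have hcfgper : ∀ n, PeriodicD (cfg n) := by
    intro n
    refine ⟨2*(n:ℤ)+1, by omega, fun i j => ?_⟩
    show c _ = c _
    congr 1
    funext t
    show redu n (i t + if t = j then 2*(n:ℤ)+1 else 0) = redu n (i t)
    by_cases ht : t = j
    · rw [if_pos ht]; exact redu_shift n (i t)
    · rw [if_neg ht, add_zero]
  have hcfg_eq : ∀ (n : ℕ) (i : Fin d → ℤ), (∀ t, |i t| ≤ (n:ℤ)) → cfg n i = c i := by
    intro n i h
    show c _ = c i
    congr 1
    funext t
    show redu n (i t) = i t
    exact redu_small (h t)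
  choose E hEper hE using fun n => hPsurj (cfg n) (hcfgper n)
  -- bound for agreement
  set N : (Fin d → ℤ) → ℕ := fun i => Finset.univ.sup fun t => (i t).natAbs with hN_def
  have hglob : ∀ (n : ℕ) (i : Fin d → ℤ), N i ≤ n → globalD d r lam (E n) i = c i := by
    intro n i h
    rw [hE n]
    refine hcfg_eq n i fun t => ?_
    have h1 : (i t).natAbs ≤ N i := by
      rw [hN_def]
      exact Finset.le_sup (f := fun t => (i t).natAbs) (Finset.mem_univ t)
    rw [Int.abs_eq_natAbs]
    exact_mod_cast le_trans h1 h
  -- ultrafilter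
  set U : Ultrafilter ℕ := Filter.hyperfilter ℕ with hU_def
  have hUat : ∀ m : ℕ, {n | m ≤ n} ∈ U := by
    intro m
    have h1 : (U : Filter ℕ) ≤ Filter.atTop := by
      rw [hU_def, ← Nat.cofinite_eq_atTop]
      exact Filter.hyperfilter_le_cofinite
    exact h1 (Filter.mem_atTop m)
  -- the limit configuration
  set e : ConfigD d := limCfg d U E with he_def
  have hmode := limCfg_mode d U E
  rw [← he_def] at hmode
  refine ⟨e, funext fun i => ?_⟩
  rcases hmode i with ⟨k, hek, hk⟩ | ⟨hek, hk⟩ | ⟨hek, hk⟩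
  · -- finite limit at i
    have hnb : ∀ v : NIdx d r,
        {n | beta r k (E n (fun t => i t + v.1 t)) = beta r k (e (fun t => i t + v.1 t))} ∈ U := by
      intro v
      rcases hmode (fun t => i t + v.1 t) with ⟨x, hj, hx⟩ | ⟨hj, hx⟩ | ⟨hj, hx⟩
      · refine Filter.mem_of_superset hx fun n hn => ?_
        simp only [Set.mem_setOf_eq] at hn ⊢
        rw [hn, hj]
      · refine Filter.mem_of_superset (hx (k + (r:ℤ))) fun n hn => ?_
        simp only [Set.mem_setOf_eq] at hn ⊢
        rw [beta_of_gt hn, hj, beta_top]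
      · refine Filter.mem_of_superset (hx (k - (r:ℤ))) fun n hn => ?_
        simp only [Set.mem_setOf_eq] at hn ⊢
        rw [beta_of_lt hn, hj, beta_bot]
    have hbig : ({n | E n i = finVal k} ∩
        ((⋂ v : NIdx d r, {n | beta r k (E n (fun t => i t + v.1 t))
          = beta r k (e (fun t => i t + v.1 t))}) ∩ {n | N i ≤ n})) ∈ U :=
      Filter.inter_mem hk (Filter.inter_mem ((Filter.iInter_mem).2 hnb) (hUat (N i)))
    obtain ⟨n, hn1, hn2, hn3⟩ := U.nonempty_of_mem hbig
    simp only [Set.mem_setOf_eq] at hn1 hn3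
    have hnbeq : nbhdD d r (E n) i = nbhdD d r e i := by
      funext v
      show beta r (refH (E n i)) (E n (fun t => i t + v.1 t))
        = beta r (refH (e i)) (e (fun t => i t + v.1 t))
      rw [hn1, hek, refH_finVal]
      have := Set.mem_iInter.1 hn2 v
      simpa only [Set.mem_setOf_eq] using this
    have h1 : globalD d r lam (E n) i = c i := hglob n i hn3
    rw [globalD_finVal hn1, hnbeq] at h1
    rw [globalD_finVal hek]
    exact h1
  · -- limit is ⊤ at i
    rw [globalD_top hek]
    rcases EZ_cases (c i) with hc | hc | ⟨m, hc⟩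
    · exfalso
      obtain ⟨n, hn1, hn2⟩ := U.nonempty_of_mem (Filter.inter_mem (hk 0) (hUat (N i)))
      simp only [Set.mem_setOf_eq] at hn1 hn2
      have h1 : globalD d r lam (E n) i = c i := hglob n i hn2
      rcases EZ_cases (E n i) with hb | ht | ⟨kk, hkEn⟩
      · rw [hb] at hn1; exact absurd hn1 (not_lt.2 bot_le)
      · rw [globalD_top ht, hc] at h1
        exact absurd h1 (by simp)
      · rw [globalD_finVal hkEn, hc] at h1
        exact finVal_ne_bot _ h1
    · rw [hc]
    · exfalso
      obtain ⟨n, hn1, hn2⟩ := U.nonempty_of_mem (Filter.inter_mem (hk (m + (r:ℤ))) (hUat (N i)))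
      simp only [Set.mem_setOf_eq] at hn1 hn2
      have h1 : globalD d r lam (E n) i = c i := hglob n i hn2
      rcases EZ_cases (E n i) with hb | ht | ⟨kk, hkEn⟩
      · rw [hb] at hn1; exact absurd hn1 (not_lt.2 bot_le)
      · rw [globalD_top ht, hc] at h1
        exact finVal_ne_top m h1.symm
      · rw [hkEn] at hn1
        have hlt : m + (r:ℤ) < kk := finVal_lt_finVal.1 hn1
        rw [globalD_finVal hkEn, hc] at h1
        have h2 := finVal_inj.1 h1
        have h3 := (hlam (nbhdD d r (E n) i)).1
        omega
  · -- limit is ⊥ at i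
    rw [globalD_bot hek]
    rcases EZ_cases (c i) with hc | hc | ⟨m, hc⟩
    · rw [hc]
    · exfalso
      obtain ⟨n, hn1, hn2⟩ := U.nonempty_of_mem (Filter.inter_mem (hk 0) (hUat (N i)))
      simp only [Set.mem_setOf_eq] at hn1 hn2
      have h1 : globalD d r lam (E n) i = c i := hglob n i hn2
      rcases EZ_cases (E n i) with hb | ht | ⟨kk, hkEn⟩
      · rw [globalD_bot hb, hc] at h1
        exact absurd h1 (by simp)
      · rw [ht] at hn1; exact absurd hn1 not_top_lt
      · rw [globalD_finVal hkEn, hc] at h1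
        exact finVal_ne_top _ h1
    · exfalso
      obtain ⟨n, hn1, hn2⟩ := U.nonempty_of_mem (Filter.inter_mem (hk (m - (r:ℤ))) (hUat (N i)))
      simp only [Set.mem_setOf_eq] at hn1 hn2
      have h1 : globalD d r lam (E n) i = c i := hglob n i hn2
      rcases EZ_cases (E n i) with hb | ht | ⟨kk, hkEn⟩
      · rw [globalD_bot hb, hc] at h1
        exact finVal_ne_bot m h1.symm
      · rw [ht] at hn1; exact absurd hn1 not_top_lt
      · rw [hkEn] at hn1
        have hlt : kk < m - (r:ℤ) := finVal_lt_finVal.1 hn1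
        rw [globalD_finVal hkEn, hc] at h1
        have h2 := finVal_inj.1 h1
        have h3 := (hlam (nbhdD d r (E n) i)).2
        omega
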